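/- Let n ≥ 1, l, r̃ ∈ ℝ and σ ∈ ℝ. With p(x,τ_b,μ_b) = x²(τ_b²+|μ_b|²) − 2σxτ_b, a(x,τ_b,μ_b) = x^{−2l−1}(τ_b²+|μ_b|²)^{r̃−1/2}, and ŝ(x,τ_b,μ_b) = 2(l+r̃)·τ_b·(τ_b²+|μ_b|²)^{−1}, one has at every point with (τ_b,μ_b) ≠ 0: {p, a} + 2·ŝ·a·p = x^{−2(l+r̃)+1}·(x²τ_b² + x²|μ_b|²)^{r̃−3/2}·4σ·( −(l+r̃)·x²τ_b² + (l+1/2)·x²|μ_b|² ). In particular, writing τ = xτ_b, μ = xμ_b, the resulting expression is manifestly a nonnegative multiple of σ wherever l+1/2 > 0 and l+r̃ < 0, and a nonpositive multiple of σ wherever l+1/2 < 0 and l+r̃ > 0. -/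
import Mathlib


/-- The b-Poisson bracket on the b-phase space `(x, τ_b, μ_b) ∈ (0,∞) × ℝ × ℝ^{n-1}`, for
symbols independent of the boundary variables `y`:
`{f, g} = (∂_{τ_b} f)(x ∂ₓ g) − (x ∂ₓ f)(∂_{τ_b} g)`. -/
noncomputable def bBracket {m : ℕ} (f g : ℝ → ℝ → EuclideanSpace ℝ (Fin m) → ℝ)
    (x τ : ℝ) (μ : EuclideanSpace ℝ (Fin m)) : ℝ :=
  deriv (fun t => f x t μ) τ * (x * deriv (fun s => g s τ μ) x)
    - (x * deriv (fun s => f s τ μ) x) * deriv (fun t => g x t μ) τ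

/-- The alternative modified commutator identity (remark after Lemma 4.4): with
`p = x²(τ_b²+|μ_b|²) − 2σxτ_b`, `a = x^{−2l−1}(τ_b²+|μ_b|²)^{r̃−1/2}` and
`ŝ = 2(l+r̃)τ_b(τ_b²+|μ_b|²)^{−1}`,
`{p,a} + 2 ŝ a p
   = x^{−2(l+r̃)+1}(x²τ_b²+x²|μ_b|²)^{r̃−3/2}·4σ(−(l+r̃)x²τ_b² + (l+1/2)x²|μ_b|²)`,
which is a nonnegative multiple of `σ` when `l+1/2 > 0`, `l+r̃ < 0`, and a nonpositive
multiple of `σ` when `l+1/2 < 0`, `l+r̃ > 0`. -/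
theorem alt_modified_commutator_symbol (n : ℕ) (hn : 1 ≤ n) (l r σ : ℝ) :
    (∀ (x τb : ℝ), 0 < x → ∀ μb : EuclideanSpace ℝ (Fin (n - 1)), (τb, μb) ≠ 0 →
      bBracket
          (fun x τ μ => x ^ 2 * (τ ^ 2 + ‖μ‖ ^ 2) - 2 * σ * x * τ)
          (fun x τ μ => x ^ (-2 * l - 1) * (τ ^ 2 + ‖μ‖ ^ 2) ^ (r - 1 / 2))
          x τb μb
        + 2 * (2 * (l + r) * τb * (τb ^ 2 + ‖μb‖ ^ 2)⁻¹) *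
            (x ^ (-2 * l - 1) * (τb ^ 2 + ‖μb‖ ^ 2) ^ (r - 1 / 2)) *
            (x ^ 2 * (τb ^ 2 + ‖μb‖ ^ 2) - 2 * σ * x * τb)
      = x ^ (-2 * (l + r) + 1) * (x ^ 2 * τb ^ 2 + x ^ 2 * ‖μb‖ ^ 2) ^ (r - 3 / 2) *
          (4 * σ) * (-(l + r) * (x ^ 2 * τb ^ 2) + (l + 1 / 2) * (x ^ 2 * ‖μb‖ ^ 2))) ∧
    (0 < l + 1 / 2 → l + r < 0 →
      ∀ (x τb : ℝ), 0 < x → ∀ μb : EuclideanSpace ℝ (Fin (n - 1)), (τb, μb) ≠ 0 →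
        0 ≤ σ * (x ^ (-2 * (l + r) + 1) * (x ^ 2 * τb ^ 2 + x ^ 2 * ‖μb‖ ^ 2) ^ (r - 3 / 2) *
          (4 * σ) * (-(l + r) * (x ^ 2 * τb ^ 2) + (l + 1 / 2) * (x ^ 2 * ‖μb‖ ^ 2)))) ∧
    (l + 1 / 2 < 0 → 0 < l + r →
      ∀ (x τb : ℝ), 0 < x → ∀ μb : EuclideanSpace ℝ (Fin (n - 1)), (τb, μb) ≠ 0 →
        σ * (x ^ (-2 * (l + r) + 1) * (x ^ 2 * τb ^ 2 + x ^ 2 * ‖μb‖ ^ 2) ^ (r - 3 / 2) *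
          (4 * σ) * (-(l + r) * (x ^ 2 * τb ^ 2) + (l + 1 / 2) * (x ^ 2 * ‖μb‖ ^ 2))) ≤ 0) := by
  refine ⟨?_, ?_, ?_⟩
  · intro x τ hx μ hne
    have hm0 : (0:ℝ) ≤ ‖μ‖ ^ 2 := by positivity
    have hne' : τ ≠ 0 ∨ μ ≠ 0 := by
      by_contra h
      push_neg at h
      exact hne (by simp [Prod.ext_iff, h.1, h.2])
    have hQQ : 0 < τ ^ 2 + ‖μ‖ ^ 2 := by
      rcases hne' with h | h
      · have : 0 < τ ^ 2 := by positivity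
        linarith
      · have : 0 < ‖μ‖ := norm_pos_iff.mpr h
        nlinarith
    set m : ℝ := ‖μ‖ ^ 2 with hm
    -- derivatives
    have hpτ : HasDerivAt (fun t : ℝ => x ^ 2 * (t ^ 2 + m) - 2 * σ * x * t)
        (x ^ 2 * (2 * τ) - 2 * σ * x) τ := by
      have h1 : HasDerivAt (fun t : ℝ => t ^ 2) (2 * τ) τ := by
        simpa using hasDerivAt_pow 2 τ
      have h2 : HasDerivAt (fun t : ℝ => 2 * σ * x * t) (2 * σ * x) τ := by
        simpa using (hasDerivAt_id τ).const_mul (2 * σ * x)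
      exact ((h1.add_const m).const_mul (x ^ 2)).sub h2
    have hpx : HasDerivAt (fun s : ℝ => s ^ 2 * (τ ^ 2 + m) - 2 * σ * s * τ)
        (2 * x * (τ ^ 2 + m) - 2 * σ * τ) x := by
      have h1 : HasDerivAt (fun s : ℝ => s ^ 2 * (τ ^ 2 + m)) (2 * x * (τ ^ 2 + m)) x := by
        simpa using (hasDerivAt_pow 2 x).mul_const (τ ^ 2 + m)
      have h2 : HasDerivAt (fun s : ℝ => 2 * σ * s * τ) (2 * σ * τ) x := by
        simpa using (((hasDerivAt_id x).const_mul (2 * σ)).mul_const τ)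
      exact h1.sub h2
    have haτ : HasDerivAt (fun t : ℝ => x ^ (-2 * l - 1) * (t ^ 2 + m) ^ (r - 1 / 2))
        (x ^ (-2 * l - 1) * (2 * τ * (r - 1 / 2) * (τ ^ 2 + m) ^ (r - 1 / 2 - 1))) τ := by
      have h1 : HasDerivAt (fun t : ℝ => t ^ 2 + m) (2 * τ) τ := by
        simpa using (hasDerivAt_pow 2 τ).add_const m
      exact (h1.rpow_const (Or.inl hQQ.ne')).const_mul _
    have hax : HasDerivAt (fun s : ℝ => s ^ (-2 * l - 1) * (τ ^ 2 + m) ^ (r - 1 / 2))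
        ((-2 * l - 1) * x ^ (-2 * l - 1 - 1) * (τ ^ 2 + m) ^ (r - 1 / 2)) x :=
      (Real.hasDerivAt_rpow_const (Or.inl hx.ne')).mul_const _
    simp only [bBracket]
    rw [hpτ.deriv, hpx.deriv, haτ.deriv, hax.deriv]
    -- rpow algebra
    have e1 : x ^ (-2 * l - 1) = x ^ (-2 * l) / x := by
      rw [Real.rpow_sub hx, Real.rpow_one]
    have e2 : x ^ (-2 * l - 1 - 1) = x ^ (-2 * l) / x / x := by
      rw [Real.rpow_sub hx, Real.rpow_sub hx, Real.rpow_one]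
    have e3 : (τ ^ 2 + m) ^ (r - 1 / 2) = (τ ^ 2 + m) ^ (r - 3 / 2) * (τ ^ 2 + m) := by
      rw [show r - 1 / 2 = r - 3 / 2 + 1 by ring, Real.rpow_add_one hQQ.ne']
    have e4 : (τ ^ 2 + m) ^ (r - 1 / 2 - 1) = (τ ^ 2 + m) ^ (r - 3 / 2) := by
      congr 1
      ring
    have e5 : x ^ 2 * τ ^ 2 + x ^ 2 * m = x ^ 2 * (τ ^ 2 + m) := by ring
    have e6 : (x ^ 2 * (τ ^ 2 + m)) ^ (r - 3 / 2)
        = x ^ (2 * (r - 3 / 2)) * (τ ^ 2 + m) ^ (r - 3 / 2) := by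
      rw [Real.mul_rpow (by positivity) hQQ.le, ← Real.rpow_natCast x 2,
        ← Real.rpow_mul hx.le]
      norm_num
    have hxp : (0:ℝ) < x ^ (2 * (r - 3 / 2)) := Real.rpow_pos_of_pos hx _
    have e7 : x ^ (-2 * (l + r) + 1)
        = x ^ (-2 * l) / x / x / x ^ (2 * (r - 3 / 2)) := by
      rw [eq_div_iff hxp.ne', ← Real.rpow_add hx,
        show -2 * (l + r) + 1 + 2 * (r - 3 / 2) = -2 * l - 1 - 1 by ring, e2]
    rw [e1, e2, e3, e4, e5, e6, e7]
    field_simp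
    ring
  · intro h1 h2 x τ hx μ hne
    have key : σ * (x ^ (-2 * (l + r) + 1) * (x ^ 2 * τ ^ 2 + x ^ 2 * ‖μ‖ ^ 2) ^ (r - 3 / 2) *
          (4 * σ) * (-(l + r) * (x ^ 2 * τ ^ 2) + (l + 1 / 2) * (x ^ 2 * ‖μ‖ ^ 2)))
        = (4 * σ ^ 2 * (x ^ (-2 * (l + r) + 1) *
            (x ^ 2 * τ ^ 2 + x ^ 2 * ‖μ‖ ^ 2) ^ (r - 3 / 2))) *
          (-(l + r) * (x ^ 2 * τ ^ 2) + (l + 1 / 2) * (x ^ 2 * ‖μ‖ ^ 2)) := by ring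
    rw [key]
    apply mul_nonneg (by positivity)
    have hc1 : 0 ≤ -(l + r) * (x ^ 2 * τ ^ 2) := by
      apply mul_nonneg (by linarith) (by positivity)
    have hc2 : 0 ≤ (l + 1 / 2) * (x ^ 2 * ‖μ‖ ^ 2) := by
      apply mul_nonneg (by linarith) (by positivity)
    linarith
  · intro h1 h2 x τ hx μ hne
    have key : σ * (x ^ (-2 * (l + r) + 1) * (x ^ 2 * τ ^ 2 + x ^ 2 * ‖μ‖ ^ 2) ^ (r - 3 / 2) *
          (4 * σ) * (-(l + r) * (x ^ 2 * τ ^ 2) + (l + 1 / 2) * (x ^ 2 * ‖μ‖ ^ 2)))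
        = (4 * σ ^ 2 * (x ^ (-2 * (l + r) + 1) *
            (x ^ 2 * τ ^ 2 + x ^ 2 * ‖μ‖ ^ 2) ^ (r - 3 / 2))) *
          (-(l + r) * (x ^ 2 * τ ^ 2) + (l + 1 / 2) * (x ^ 2 * ‖μ‖ ^ 2)) := by ring
    rw [key]
    apply mul_nonpos_of_nonneg_of_nonpos (by positivity)
    have hc1 : -(l + r) * (x ^ 2 * τ ^ 2) ≤ 0 := by
      apply mul_nonpos_of_nonpos_of_nonneg (by linarith) (by positivity)
    have hc2 : (l + 1 / 2) * (x ^ 2 * ‖μ‖ ^ 2) ≤ 0 := by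
      apply mul_nonpos_of_nonpos_of_nonneg (by linarith) (by positivity)
    linarith
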